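/- (Gradient lower bound propagation, step in Lemma 3.4.) Let u be Lipschitz on B̄₁(0) with Lipschitz constant C and a viscosity subsolution of Δ_∞u = 0, and suppose S⁺u(0) = δ > 0, where S⁺u(z) = lim_{s→0⁺}(max_{∂B_s(z)}u - u(z))/s. Let ε > 0 be small, x_ε ∈ B_{1/2}(0), and let h_ε ∈ ∂B_{ε^{3/4}}(0) satisfy u(x_ε + h_ε) = max_{|h| = ε^{3/4}} u(x_ε + h); assume additionally that u(x_ε + h_ε) - u(y_ε) ≥ max_{|h| ≤ ε^{3/4}}(u(h) - u(0)) + |y_ε|⁴ + |x_ε - y_ε|²/(2ε) for some y_ε with |x_ε - y_ε| ≤ Cε. Then S⁺u(x_ε + h_ε) ≥ δ - C²ε^{1/4}. -/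

import Mathlib

open scoped RealInnerProductSpace
open Metric

variable {n : ℕ}

/-- The infinity Laplacian `Δ_∞ φ (x) = Dφ(x) · D²φ(x) · Dφ(x)`. -/
noncomputable def infLap (φ : EuclideanSpace ℝ (Fin n) → ℝ) (x : EuclideanSpace ℝ (Fin n)) : ℝ :=
  ⟪fderiv ℝ (gradient φ) x (gradient φ x), gradient φ x⟫

/-- Viscosity subsolution of `Δ_∞ u = 0` in `Ω`. -/
def InfSubsol0 (Ω : Set (EuclideanSpace ℝ (Fin n))) (u : EuclideanSpace ℝ (Fin n) → ℝ) : Prop :=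
  ∀ x₀ ∈ Ω, ∀ φ : EuclideanSpace ℝ (Fin n) → ℝ, ContDiff ℝ 2 φ →
    IsLocalMax (fun x => u x - φ x) x₀ → infLap φ x₀ ≥ 0

/-- `S⁺u(z) = lim_{s→0⁺} (max_{∂B_s(z)} u - u(z))/s`, realized (by monotonicity) as an
infimum over admissible radii. -/
noncomputable def Splus (Ω : Set (EuclideanSpace ℝ (Fin n)))
    (u : EuclideanSpace ℝ (Fin n) → ℝ) (z : EuclideanSpace ℝ (Fin n)) : ℝ :=
  sInf {q : ℝ | ∃ s : ℝ, 0 < s ∧ closedBall z s ⊆ Ω ∧ q = (sSup (u '' sphere z s) - u z) / s}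



open Topology Filter

local notation "E" => EuclideanSpace ℝ (Fin n)

section Radial
-- (insert radial lemmas from t2/t3 here; assume they exist)
lemma radial_hasGradientAt (f f1 : ℝ → ℝ) (c : E)
    (hf : ∀ t : ℝ, 0 ≤ t → HasDerivAt f (f1 t) t) (x : E) :
    HasGradientAt (fun z : E => f (‖z - c‖^2)) ((2 * f1 (‖x - c‖^2)) • (x - c)) x := by
  have h1 : HasFDerivAt (fun z : E => ‖z - c‖^2) (2 • (innerSL ℝ (x - c))) x := by
    have := ((hasFDerivAt_id x).sub (hasFDerivAt_const c x)).norm_sq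
    simpa using this
  have h2 := (hf _ (sq_nonneg _)).comp_hasFDerivAt x h1
  rw [hasGradientAt_iff_hasFDerivAt]
  refine h2.congr_fderiv ?_
  ext y
  simp [InnerProductSpace.toDual_apply_apply, innerSL_apply_apply, real_inner_smul_left, two_smul]
  ring

lemma radial_gradient (f f1 : ℝ → ℝ) (c : E)
    (hf : ∀ t : ℝ, 0 ≤ t → HasDerivAt f (f1 t) t) :
    gradient (fun z : E => f (‖z - c‖^2)) = fun z : E => (2 * f1 (‖z - c‖^2)) • (z - c) :=
  gradient_eq (fun x => radial_hasGradientAt f f1 c hf x)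

lemma radial_infLap (f f1 f2 : ℝ → ℝ) (c : E)
    (hf : ∀ t : ℝ, 0 ≤ t → HasDerivAt f (f1 t) t)
    (hf1 : ∀ t : ℝ, 0 ≤ t → HasDerivAt f1 (f2 t) t) (x : E) :
    infLap (fun z : E => f (‖z - c‖^2)) x =
      8 * (f1 (‖x - c‖^2))^3 * ‖x - c‖^2
        + 16 * (f2 (‖x - c‖^2)) * (f1 (‖x - c‖^2))^2 * (‖x - c‖^2)^2 := by
  have hG := radial_gradient f f1 c hf
  have h1 : HasFDerivAt (fun z : E => ‖z - c‖^2) (2 • (innerSL ℝ (x - c))) x := by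
    have := ((hasFDerivAt_id x).sub (hasFDerivAt_const c x)).norm_sq
    simpa using this
  set w : E := x - c with hw
  set t : ℝ := ‖x - c‖^2 with ht
  have hscal : HasFDerivAt (fun z : E => 2 * f1 (‖z - c‖^2))
      ((2:ℝ) • (f2 t • (2 • (innerSL ℝ w)))) x :=
    (((hf1 t (sq_nonneg _)).comp_hasFDerivAt x h1)).const_mul 2
  have hid : HasFDerivAt (fun z : E => z - c) (ContinuousLinearMap.id ℝ E) x := by
    simpa using (hasFDerivAt_id (𝕜 := ℝ) x).sub_const c
  have hD : HasFDerivAt (fun z : E => (2 * f1 (‖z - c‖^2)) • (z - c))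
      ((2 * f1 t) • ContinuousLinearMap.id ℝ E
        + ((2:ℝ) • (f2 t • (2 • (innerSL ℝ w)))).smulRight w) x :=
    hscal.smul hid
  have hfd : fderiv ℝ (gradient (fun z : E => f (‖z - c‖^2))) x
      = (2 * f1 t) • ContinuousLinearMap.id ℝ E
        + ((2:ℝ) • (f2 t • (2 • (innerSL ℝ w)))).smulRight w := by
    rw [hG]; exact hD.fderiv
  have hGx : gradient (fun z : E => f (‖z - c‖^2)) x = (2 * f1 t) • w := by
    rw [hG]
  unfold infLap
  rw [hfd, hGx]
  have hww : ⟪w, w⟫ = t := real_inner_self_eq_norm_sq w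
  simp only [ContinuousLinearMap.add_apply, ContinuousLinearMap.smul_apply,
    ContinuousLinearMap.smulRight_apply, ContinuousLinearMap.id_apply, innerSL_apply_apply,
    smul_eq_mul, nsmul_eq_mul, Nat.cast_ofNat, inner_add_left, real_inner_smul_left, real_inner_smul_right, hww]
  ring

lemma coneProf_deriv (a γ η : ℝ) (hη : 0 < η) :
    ∀ t : ℝ, 0 ≤ t → HasDerivAt (fun t => a * Real.sqrt (t + η) - γ * t)
      (a / (2 * Real.sqrt (t + η)) - γ) t := by
  intro t ht
  have hs : (0:ℝ) < t + η := by linarith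
  have h1 : HasDerivAt (fun t : ℝ => t + η) 1 t := (hasDerivAt_id t).add_const η
  have h2 : HasDerivAt (fun t : ℝ => Real.sqrt (t + η)) (1 / (2 * Real.sqrt (t + η))) t := by
    simpa [Function.comp_def] using (Real.hasDerivAt_sqrt (ne_of_gt hs)).comp t h1
  have := (h2.const_mul a).sub ((hasDerivAt_id t).const_mul γ)
  refine HasDerivAt.congr_deriv this ?_
  ring

lemma coneProf_deriv2 (a γ η : ℝ) (hη : 0 < η) :
    ∀ t : ℝ, 0 ≤ t → HasDerivAt (fun t => a / (2 * Real.sqrt (t + η)) - γ)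
      (-(a / (4 * ((t + η) * Real.sqrt (t + η))))) t := by
  intro t ht
  have hs : (0:ℝ) < t + η := by linarith
  have hsq : (0:ℝ) < Real.sqrt (t + η) := Real.sqrt_pos.mpr hs
  have h1 : HasDerivAt (fun t : ℝ => t + η) 1 t := (hasDerivAt_id t).add_const η
  have h2 : HasDerivAt (fun t : ℝ => Real.sqrt (t + η)) (1 / (2 * Real.sqrt (t + η))) t := by
    simpa [Function.comp_def] using (Real.hasDerivAt_sqrt (ne_of_gt hs)).comp t h1
  have h3 : HasDerivAt (fun t : ℝ => 2 * Real.sqrt (t + η)) (2 * (1 / (2 * Real.sqrt (t + η)))) t :=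
    h2.const_mul 2
  have h4 := (h3.inv (by positivity)).const_mul a
  have h5 := h4.sub_const γ
  have : (fun t : ℝ => a * (2 * Real.sqrt (t + η))⁻¹ - γ)
      = fun t : ℝ => a / (2 * Real.sqrt (t + η)) - γ := by
    funext t; rw [div_eq_mul_inv]
  simp only [Pi.inv_apply] at h5
  rw [this] at h5
  refine HasDerivAt.congr_deriv h5 ?_
  have hss : Real.sqrt (t + η) * Real.sqrt (t + η) = t + η := Real.mul_self_sqrt (le_of_lt hs)
  field_simp
  linear_combination (4 * a) * hss

lemma coneTest_contDiff (a γ η : ℝ) (hη : 0 < η) (c : E) :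
    ContDiff ℝ 2 (fun z : E => a * Real.sqrt (‖z - c‖^2 + η) - γ * ‖z - c‖^2) := by
  have hn : ContDiff ℝ 2 (fun z : E => ‖z - c‖^2 + η) :=
    ((contDiff_id.sub contDiff_const).norm_sq ℝ).add contDiff_const
  rw [contDiff_iff_contDiffAt]
  intro x
  have hpos : ‖x - c‖^2 + η ≠ 0 := by positivity
  have h1 : ContDiffAt ℝ 2 (fun z : E => Real.sqrt (‖z - c‖^2 + η)) x :=
    (Real.contDiffAt_sqrt hpos).comp x hn.contDiffAt
  exact (h1.const_smul a).sub (((contDiff_id.sub contDiff_const).norm_sq ℝ).contDiffAt.const_smul γ)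

lemma coneTest_infLap_neg (a γ η ρ₁ R : ℝ) (c x : E)
    (ha : 0 < a) (hγ : 0 < γ) (hρ₁ : 0 < ρ₁) (hη : 0 < η) (hη1 : η ≤ 1)
    (hηρ : η ≤ γ * ρ₁^3 / a) (hγa : γ ≤ a / (4 * Real.sqrt (R^2+1)))
    (hx1 : ρ₁ ≤ ‖x - c‖) (hx2 : ‖x - c‖ ≤ R) :
    infLap (fun z : E => a * Real.sqrt (‖z - c‖^2 + η) - γ * ‖z - c‖^2) x < 0 := by
  have heq : infLap (fun z : E => a * Real.sqrt (‖z - c‖^2 + η) - γ * ‖z - c‖^2) x =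
      8 * ((a / (2 * Real.sqrt (‖x - c‖^2 + η)) - γ))^3 * ‖x - c‖^2
        + 16 * (-(a / (4 * ((‖x - c‖^2 + η) * Real.sqrt (‖x - c‖^2 + η)))))
          * ((a / (2 * Real.sqrt (‖x - c‖^2 + η)) - γ))^2 * (‖x - c‖^2)^2 :=
    radial_infLap (fun t => a * Real.sqrt (t + η) - γ * t)
      (fun t => a / (2 * Real.sqrt (t + η)) - γ)
      (fun t => -(a / (4 * ((t + η) * Real.sqrt (t + η))))) c
      (coneProf_deriv a γ η hη) (coneProf_deriv2 a γ η hη) x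
  rw [heq]
  set t : ℝ := ‖x - c‖^2 with htdef
  have ht1 : ρ₁^2 ≤ t := by
    have := pow_le_pow_left₀ (le_of_lt hρ₁) hx1 2
    simpa [htdef] using this
  have ht2 : t ≤ R^2 := by
    have := pow_le_pow_left₀ (norm_nonneg _) hx2 2
    simpa [htdef] using this
  have htpos : 0 < t := lt_of_lt_of_le (by positivity) ht1
  have hs : (0:ℝ) < t + η := by linarith
  set q : ℝ := Real.sqrt (t + η) with hqdef
  have hq : 0 < q := Real.sqrt_pos.mpr hs
  have hqq : q^2 = t + η := Real.sq_sqrt (le_of_lt hs)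
  have hR1 : (0:ℝ) < Real.sqrt (R^2+1) := Real.sqrt_pos.mpr (by positivity)
  have hqle : q ≤ Real.sqrt (R^2+1) := Real.sqrt_le_sqrt (by linarith)
  -- f1 ≥ γ > 0
  have hf1 : γ ≤ a / (2 * q) - γ := by
    have h1 : a / (2 * Real.sqrt (R^2+1)) ≤ a / (2 * q) :=
      div_le_div_of_nonneg_left (le_of_lt ha) (by positivity) (by linarith)
    have h2 : γ ≤ a / (4 * Real.sqrt (R^2+1)) := hγa
    have h3 : a / (4 * Real.sqrt (R^2+1)) < a / (2 * Real.sqrt (R^2+1)) := by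
      apply div_lt_div_of_pos_left ha (by positivity)
      nlinarith
    -- γ ≤ a/(4√) and 2*(a/(4√)) = a/(2√) ≤ a/(2q), so a/(2q) - γ ≥ 2γ - γ = γ... need strict
    have h4 : 2 * (a / (4 * Real.sqrt (R^2+1))) = a / (2 * Real.sqrt (R^2+1)) := by
      field_simp; ring
    linarith [h1, h2, h4]
  have hf1pos : 0 < a / (2 * q) - γ := lt_of_lt_of_le hγ hf1
  have hcav : (a / (2 * q) - γ) + 2 * (-(a / (4 * ((t + η) * q)))) * t < 0 := by
    have hkey : (a / (2 * q) - γ) + 2 * (-(a / (4 * ((t + η) * q)))) * t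
        = a * η / (2 * ((t + η) * q)) - γ := by
      field_simp
      ring
    rw [hkey]
    have h5 : ρ₁ ≤ q := by
      have h5' : ρ₁^2 ≤ t + η := by linarith
      calc ρ₁ = Real.sqrt (ρ₁^2) := (Real.sqrt_sq (le_of_lt hρ₁)).symm
      _ ≤ q := Real.sqrt_le_sqrt h5'
    have hcube : ρ₁^3 ≤ (t + η) * q := by
      calc ρ₁^3 = ρ₁^2 * ρ₁ := by ring
      _ ≤ (t + η) * q := mul_le_mul (by linarith) h5 (le_of_lt hρ₁) (by linarith)
    have h6 : a * η ≤ γ * ρ₁^3 := by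
      nlinarith [(le_div_iff₀ ha).mp hηρ]
    have h7 : a * η / (2 * ((t + η) * q)) < γ := by
      rw [div_lt_iff₀ (by positivity)]
      have h8 : a * η ≤ γ * ((t + η) * q) :=
        le_trans h6 (mul_le_mul_of_nonneg_left hcube (le_of_lt hγ))
      have h9 : 0 < γ * ((t + η) * q) := by positivity
      have h10 : γ * (2 * ((t + η) * q)) = 2 * (γ * ((t + η) * q)) := by ring
      rw [h10]
      linarith
    linarith
  have hfac : 8 * ((a / (2 * q) - γ))^3 * t
        + 16 * (-(a / (4 * ((t + η) * q)))) * ((a / (2 * q) - γ))^2 * t^2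
      = (8 * (a / (2 * q) - γ)^2 * t) * ((a / (2 * q) - γ) + 2 * (-(a / (4 * ((t + η) * q)))) * t) := by
    ring
  rw [hfac]
  exact mul_neg_of_pos_of_neg (by positivity) hcav

lemma parabola_infLap (γ : ℝ) (v x : E) :
    infLap (fun z : E => -γ * ‖z - v‖^2) x = 8 * (-γ)^3 * ‖x - v‖^2 := by
  have h := radial_infLap (fun t => -γ * t) (fun _ => -γ) (fun _ => 0) v
    (fun t _ => by simpa using (hasDerivAt_id t).const_mul (-γ))
    (fun t _ => hasDerivAt_const t (-γ)) x
  simpa using h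

lemma parabola_contDiff (γ : ℝ) (v : E) :
    ContDiff ℝ 2 (fun z : E => -γ * ‖z - v‖^2) :=
  contDiff_const.mul ((contDiff_id.sub contDiff_const).norm_sq ℝ)

set_option maxHeartbeats 1000000 in
lemma coneComparison (u : E → ℝ) (C : ℝ) (hC : 0 ≤ C)
    (hLip : LipschitzOnWith C.toNNReal u (closedBall (0:E) 1))
    (hsub : InfSubsol0 (ball (0:E) 1) u)
    (c : E) (R a : ℝ) (hR : 0 < R) (ha : 0 < a)
    (hball : closedBall c R ⊆ ball (0:E) 1)
    (z : E) (hz : z ∈ closedBall c R) :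
    u z ≤ max (sSup (u '' sphere c R) - a * R) (u c) + a * ‖z - c‖ := by
  have hsub1 : closedBall c R ⊆ closedBall (0:E) 1 := hball.trans ball_subset_closedBall
  have hucont : ContinuousOn u (closedBall c R) := (hLip.continuousOn).mono hsub1
  have hlipR : ∀ p q', p ∈ closedBall c R → q' ∈ closedBall c R → u p - u q' ≤ C * ‖p - q'‖ := by
    intro p q' hp hq'
    have h := hLip.dist_le_mul p (hsub1 hp) q' (hsub1 hq')
    rw [Real.coe_toNNReal C hC] at h
    calc u p - u q' ≤ |u p - u q'| := le_abs_self _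
    _ = dist (u p) (u q') := (Real.dist_eq _ _).symm
    _ ≤ C * dist p q' := h
    _ = C * ‖p - q'‖ := by rw [dist_eq_norm]
  have hbdd : BddAbove (u '' sphere c R) :=
    ((isCompact_sphere c R).image_of_continuousOn
      (hucont.mono sphere_subset_closedBall)).bddAbove
  rw [← sub_le_iff_le_add]
  refine le_of_forall_pos_le_add ?_
  intro θ hθ
  obtain ⟨ρ₁, hρ₁, hρ₁1, hρ₁θ⟩ :
      ∃ ρ₁ : ℝ, 0 < ρ₁ ∧ ρ₁ ≤ 1 ∧ ρ₁ ≤ θ / (6 * (C + a + 1)) :=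
    ⟨min 1 (θ / (6 * (C + a + 1))), lt_min one_pos (by positivity), min_le_left _ _,
      min_le_right _ _⟩
  obtain ⟨γ, hγ, hγθ, hγa⟩ :
      ∃ γ : ℝ, 0 < γ ∧ γ ≤ θ / (6 * (R^2+1)) ∧ γ ≤ a / (4 * Real.sqrt (R^2+1)) :=
    ⟨min (θ / (6 * (R^2+1))) (a / (4 * Real.sqrt (R^2+1))),
      lt_min (by positivity) (by positivity), min_le_left _ _, min_le_right _ _⟩
  obtain ⟨η, hη, hη1, hηρ, hsqη⟩ :
      ∃ η : ℝ, 0 < η ∧ η ≤ 1 ∧ η ≤ γ * ρ₁^3 / a ∧ Real.sqrt η ≤ θ / (6*(a+1)) := by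
    refine ⟨min (min 1 (γ * ρ₁^3 / a)) ((θ / (6*(a+1)))^2),
      lt_min (lt_min one_pos (by positivity)) (by positivity),
      le_trans (min_le_left _ _) (min_le_left _ _),
      le_trans (min_le_left _ _) (min_le_right _ _), ?_⟩
    calc Real.sqrt (min (min 1 (γ * ρ₁^3 / a)) ((θ / (6*(a+1)))^2))
        ≤ Real.sqrt ((θ / (6*(a+1)))^2) := Real.sqrt_le_sqrt (min_le_right _ _)
    _ = θ / (6*(a+1)) := Real.sqrt_sq (by positivity)
  obtain ⟨φ, hφc2, hφdef⟩ : ∃ φ : E → ℝ, ContDiff ℝ 2 φ ∧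
      φ = fun w => a * Real.sqrt (‖w - c‖^2 + η) - γ * ‖w - c‖^2 :=
    ⟨_, coneTest_contDiff a γ η hη c, rfl⟩
  obtain ⟨x₀, hx₀K, hx₀max⟩ :=
    (isCompact_closedBall c R).exists_isMaxOn (⟨c, mem_closedBall_self hR.le⟩)
      (hucont.sub hφc2.continuous.continuousOn)
  have hmax : ∀ w ∈ closedBall c R, u w - φ w ≤ u x₀ - φ x₀ := fun w hw => hx₀max hw
  have hρ₀R : ‖x₀ - c‖ ≤ R := by rwa [mem_closedBall, dist_eq_norm] at hx₀K
  have hφz_le : φ z ≤ a * ‖z - c‖ + a * Real.sqrt η := by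
    have h2 : ‖z - c‖^2 + η ≤ (‖z - c‖ + Real.sqrt η)^2 := by
      nlinarith [Real.sq_sqrt hη.le, Real.sqrt_nonneg η, norm_nonneg (z - c)]
    have h1 : Real.sqrt (‖z - c‖^2 + η) ≤ ‖z - c‖ + Real.sqrt η := by
      calc Real.sqrt (‖z - c‖^2 + η) ≤ Real.sqrt ((‖z - c‖ + Real.sqrt η)^2) :=
            Real.sqrt_le_sqrt h2
      _ = ‖z - c‖ + Real.sqrt η := Real.sqrt_sq (by positivity)
    have h3 : a * Real.sqrt (‖z - c‖^2 + η) ≤ a * (‖z - c‖ + Real.sqrt η) :=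
      mul_le_mul_of_nonneg_left h1 ha.le
    have h4 : 0 ≤ γ * ‖z - c‖^2 := by positivity
    simp only [hφdef]
    rw [mul_add] at h3
    linarith
  have hmain : u x₀ - φ x₀ ≤ max (sSup (u '' sphere c R) - a * R) (u c) + (θ/6 + θ/6) := by
    rcases lt_or_ge ‖x₀ - c‖ ρ₁ with hnear | hfar
    · have h1 : u x₀ - u c ≤ C * ‖x₀ - c‖ := by
        simpa using hlipR x₀ c hx₀K (mem_closedBall_self hR.le)
      have h2 : -(γ * ρ₁^2) ≤ φ x₀ := by
        have h3 : 0 ≤ a * Real.sqrt (‖x₀ - c‖^2 + η) := by positivity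
        have hle : ‖x₀ - c‖^2 ≤ ρ₁^2 := by nlinarith [norm_nonneg (x₀ - c)]
        have h4 : γ * ‖x₀ - c‖^2 ≤ γ * ρ₁^2 := mul_le_mul_of_nonneg_left hle hγ.le
        simp only [hφdef]
        linarith
      have hCρ : C * ‖x₀ - c‖ ≤ θ/6 := by
        have : C * ‖x₀ - c‖ ≤ C * ρ₁ := mul_le_mul_of_nonneg_left hnear.le hC
        have h5 : C * ρ₁ ≤ (C + a + 1) * (θ / (6 * (C + a + 1))) := by
          apply mul_le_mul (by linarith) hρ₁θ hρ₁.le (by positivity)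
        have h6 : (C + a + 1) * (θ / (6 * (C + a + 1))) = θ/6 := by
          field_simp
        linarith
      have hγρ : γ * ρ₁^2 ≤ θ/6 := by
        have h7 : γ * ρ₁^2 ≤ γ := by
          nlinarith [mul_nonneg hγ.le (by nlinarith : (0:ℝ) ≤ 1 - ρ₁^2)]
        have h8 : γ ≤ θ/6 := le_trans hγθ
          (div_le_div_of_nonneg_left hθ.le (by norm_num) (by nlinarith [sq_nonneg R]))
        linarith
      have h9 : u x₀ - φ x₀ ≤ u c + (θ/6 + θ/6) := by linarith
      have h10 := le_max_right (sSup (u '' sphere c R) - a * R) (u c)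
      linarith
    · rcases eq_or_lt_of_le hρ₀R with heq | hlt
      · have hx₀s : x₀ ∈ sphere c R := by rw [mem_sphere, dist_eq_norm]; exact heq
        have hM : u x₀ ≤ sSup (u '' sphere c R) := le_csSup hbdd ⟨x₀, hx₀s, rfl⟩
        have hsR : R ≤ Real.sqrt (R^2 + η) := by
          calc R = Real.sqrt (R^2) := (Real.sqrt_sq hR.le).symm
          _ ≤ Real.sqrt (R^2 + η) := Real.sqrt_le_sqrt (by linarith)
        have hφ : a * R - γ * R^2 ≤ φ x₀ := by
          simp only [hφdef, heq]
          linarith [mul_le_mul_of_nonneg_left hsR ha.le]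
        have hγR : γ * R^2 ≤ θ/6 := by
          have h11 : γ * R^2 ≤ (θ / (6 * (R^2+1))) * R^2 := by
            apply mul_le_mul_of_nonneg_right hγθ (sq_nonneg R)
          have h12 : (θ / (6 * (R^2+1))) * R^2 ≤ θ/6 := by
            rw [div_mul_eq_mul_div, div_le_div_iff₀ (by positivity) (by norm_num)]
            nlinarith [sq_nonneg R]
          linarith
        have h13 := le_max_left (sSup (u '' sphere c R) - a * R) (u c)
        linarith
      · exfalso
        have hx₀b : x₀ ∈ ball (0:E) 1 := hball hx₀K
        have hloc : IsLocalMax (fun w => u w - φ w) x₀ := by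
          have hnb : closedBall c R ∈ 𝓝 x₀ := by
            apply Filter.mem_of_superset
              (isOpen_ball.mem_nhds (show x₀ ∈ ball c R by
                rw [mem_ball, dist_eq_norm]; exact hlt))
            exact ball_subset_closedBall
          exact Filter.eventually_of_mem hnb (fun w hw => hmax w hw)
        have hge := hsub x₀ hx₀b φ hφc2 hloc
        have hneg := coneTest_infLap_neg a γ η ρ₁ R c x₀ ha hγ hρ₁ hη hη1 hηρ hγa hfar hρ₀R
        rw [hφdef] at hge
        linarith
  have hfinal := hmax z hz
  have haη : a * Real.sqrt η ≤ θ/6 := by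
    have h14 : a * Real.sqrt η ≤ a * (θ / (6*(a+1))) :=
      mul_le_mul_of_nonneg_left hsqη ha.le
    have h15 : a * (θ / (6*(a+1))) ≤ θ/6 := by
      rw [mul_div_assoc', div_le_div_iff₀ (by positivity) (by norm_num)]
      nlinarith
    linarith
  have hθ6 : θ/6 + θ/6 + θ/6 ≤ θ := by linarith
  linarith [hφz_le, hmain, hfinal, haη]

lemma ball_margin [Nontrivial (EuclideanSpace ℝ (Fin n))] (x : E) (r : ℝ) (hr : 0 < r)
    (h : closedBall x r ⊆ ball (0:E) 1) : ‖x‖ + r < 1 := by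
  obtain ⟨d, hd1, hd2⟩ : ∃ d : E, ‖d‖ = 1 ∧ ‖x + r • d‖ = ‖x‖ + r := by
    by_cases hx : x = 0
    · obtain ⟨v, hv⟩ := exists_ne (0:E)
      have hnv : (0:ℝ) < ‖v‖ := norm_pos_iff.mpr hv
      refine ⟨‖v‖⁻¹ • v, ?_, ?_⟩
      · rw [norm_smul, Real.norm_eq_abs, abs_of_pos (by positivity)]
        field_simp
      · subst hx
        rw [zero_add, norm_smul, norm_smul, Real.norm_eq_abs, Real.norm_eq_abs,
          abs_of_pos hr, abs_of_pos (by positivity)]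
        simp
        field_simp
    · have hnx : (0:ℝ) < ‖x‖ := norm_pos_iff.mpr hx
      refine ⟨‖x‖⁻¹ • x, ?_, ?_⟩
      · rw [norm_smul, Real.norm_eq_abs, abs_of_pos (by positivity)]
        field_simp
      · have he : x + r • (‖x‖⁻¹ • x) = (1 + r * ‖x‖⁻¹) • x := by
          rw [smul_smul, add_smul, one_smul]
        rw [he, norm_smul, Real.norm_eq_abs, abs_of_pos (by positivity)]
        field_simp
  have hmem : x + r • d ∈ closedBall x r := by
    rw [mem_closedBall, dist_eq_norm]
    simp [norm_smul, hd1, abs_of_nonneg hr.le]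
  have := h hmem
  rw [mem_ball, dist_zero_right] at this
  linarith [hd2 ▸ this]

lemma bddAbove_image_u (u : E → ℝ) (C : ℝ) (hC : 0 ≤ C)
    (hLip : LipschitzOnWith C.toNNReal u (closedBall (0:E) 1))
    (s : Set E) (hs : IsCompact s) (hsub : s ⊆ closedBall (0:E) 1) :
    BddAbove (u '' s) :=
  (hs.image_of_continuousOn (hLip.continuousOn.mono hsub)).bddAbove

set_option maxHeartbeats 1000000 in
lemma maxPrinciple [Nontrivial (EuclideanSpace ℝ (Fin n))]
    (u : E → ℝ) (C : ℝ) (hC : 0 ≤ C)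
    (hLip : LipschitzOnWith C.toNNReal u (closedBall (0:E) 1))
    (hsub : InfSubsol0 (ball (0:E) 1) u)
    (c : E) (R : ℝ) (hR : 0 < R)
    (hball : closedBall c R ⊆ ball (0:E) 1) :
    u c ≤ sSup (u '' sphere c R) := by
  have hsub1 : closedBall c R ⊆ closedBall (0:E) 1 := hball.trans ball_subset_closedBall
  have hucont : ContinuousOn u (closedBall c R) := (hLip.continuousOn).mono hsub1
  have hbdd : BddAbove (u '' sphere c R) :=
    bddAbove_image_u u C hC hLip _ (isCompact_sphere c R)
      ((sphere_subset_closedBall).trans hsub1)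
  refine le_of_forall_pos_le_add ?_
  intro θ hθ
  obtain ⟨e₀, he₀⟩ : ∃ d : E, ‖d‖ = 1 := by
    obtain ⟨v, hv⟩ := exists_ne (0:E)
    have hnv : (0:ℝ) < ‖v‖ := norm_pos_iff.mpr hv
    refine ⟨‖v‖⁻¹ • v, ?_⟩
    rw [norm_smul, Real.norm_eq_abs, abs_of_pos (by positivity)]
    field_simp
  obtain ⟨γ, hγ, hγθ⟩ : ∃ γ : ℝ, 0 < γ ∧ γ * (9 * R^2) ≤ θ := by
    refine ⟨θ / (9 * R^2 + 1), by positivity, ?_⟩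
    rw [div_mul_eq_mul_div, div_le_iff₀ (by positivity)]
    nlinarith [sq_nonneg R]
  set v : E := c + (2*R) • e₀ with hvdef
  obtain ⟨φ, hφc2, hφdef⟩ : ∃ φ : E → ℝ, ContDiff ℝ 2 φ ∧ φ = fun w : E => -γ * ‖w - v‖^2 :=
    ⟨_, parabola_contDiff γ v, rfl⟩
  obtain ⟨x₀, hx₀K, hx₀max⟩ :=
    (isCompact_closedBall c R).exists_isMaxOn (⟨c, mem_closedBall_self hR.le⟩)
      (hucont.sub hφc2.continuous.continuousOn)
  have hmax : ∀ w ∈ closedBall c R, u w - φ w ≤ u x₀ - φ x₀ := fun w hw => hx₀max hw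
  have hρ₀R : ‖x₀ - c‖ ≤ R := by rwa [mem_closedBall, dist_eq_norm] at hx₀K
  have hx₀v : R ≤ ‖x₀ - v‖ := by
    have h1 : ‖x₀ - v‖ = ‖(2*R) • e₀ - (x₀ - c)‖ := by
      rw [norm_sub_rev, hvdef]
      congr 1
      abel
    have h2 : ‖(2*R) • e₀‖ - ‖x₀ - c‖ ≤ ‖(2*R) • e₀ - (x₀ - c)‖ := norm_sub_norm_le _ _
    have h3 : ‖(2*R) • e₀‖ = 2*R := by
      rw [norm_smul, Real.norm_eq_abs, abs_of_pos (by positivity), he₀, mul_one]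
    rw [h1]
    linarith
  rcases eq_or_lt_of_le hρ₀R with heq | hlt
  · -- max on the sphere
    have hx₀s : x₀ ∈ sphere c R := by rw [mem_sphere, dist_eq_norm]; exact heq
    have hM : u x₀ ≤ sSup (u '' sphere c R) := le_csSup hbdd ⟨x₀, hx₀s, rfl⟩
    have hmc := hmax c (mem_closedBall_self hR.le)
    have hx₀v3 : ‖x₀ - v‖ ≤ 3*R := by
      have h4 : ‖x₀ - v‖ ≤ ‖x₀ - c‖ + ‖c - v‖ := norm_sub_le_norm_sub_add_norm_sub _ c _
      have h5 : ‖c - v‖ = 2*R := by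
        rw [hvdef]
        simp only [sub_add_cancel_left, norm_neg]
        rw [norm_smul, Real.norm_eq_abs, abs_of_pos (by positivity), he₀, mul_one]
      linarith
    have hφc : φ c = -γ * ‖c - v‖^2 := by rw [hφdef]
    have hφx₀ : φ x₀ = -γ * ‖x₀ - v‖^2 := by rw [hφdef]
    have hcv : ‖c - v‖ = 2*R := by
      rw [hvdef]
      simp only [sub_add_cancel_left, norm_neg]
      rw [norm_smul, Real.norm_eq_abs, abs_of_pos (by positivity), he₀, mul_one]
    -- u c ≤ u x₀ - φ x₀ + φ c ≤ M + γ‖x₀-v‖² - γ‖c-v‖² ≤ M + γ 9R²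
    have h6 : γ * ‖x₀ - v‖^2 ≤ γ * (3*R)^2 := by
      apply mul_le_mul_of_nonneg_left ?_ hγ.le
      nlinarith [norm_nonneg (x₀ - v)]
    have h7 : (0:ℝ) ≤ γ * ‖c - v‖^2 := by positivity
    nlinarith [hmc, hM, h6, h7]
  · -- interior max: contradiction
    exfalso
    have hx₀b : x₀ ∈ ball (0:E) 1 := hball hx₀K
    have hloc : IsLocalMax (fun w => u w - φ w) x₀ := by
      have hnb : closedBall c R ∈ 𝓝 x₀ := by
        apply Filter.mem_of_superset
          (isOpen_ball.mem_nhds (show x₀ ∈ ball c R by rw [mem_ball, dist_eq_norm]; exact hlt))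
        exact ball_subset_closedBall
      exact Filter.eventually_of_mem hnb (fun w hw => hmax w hw)
    have hge := hsub x₀ hx₀b φ hφc2 hloc
    have hneg : infLap φ x₀ < 0 := by
      rw [hφdef, parabola_infLap γ v x₀]
      have h8 : (0:ℝ) < ‖x₀ - v‖^2 := by nlinarith [hx₀v, hR]
      nlinarith [mul_pos (pow_pos hγ 3) h8]
    linarith

lemma coneBound [Nontrivial (EuclideanSpace ℝ (Fin n))]
    (u : E → ℝ) (C : ℝ) (hC : 0 ≤ C)
    (hLip : LipschitzOnWith C.toNNReal u (closedBall (0:E) 1))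
    (hsub : InfSubsol0 (ball (0:E) 1) u)
    (c : E) (R : ℝ) (hR : 0 < R)
    (hball : closedBall c R ⊆ ball (0:E) 1)
    (z : E) (hz : z ∈ closedBall c R) :
    u z ≤ u c + (sSup (u '' sphere c R) - u c) / R * ‖z - c‖ := by
  have hQ0 : 0 ≤ (sSup (u '' sphere c R) - u c) / R :=
    div_nonneg (by linarith [maxPrinciple u C hC hLip hsub c R hR hball]) hR.le
  have hzR : ‖z - c‖ ≤ R := by rwa [mem_closedBall, dist_eq_norm] at hz
  refine le_of_forall_pos_le_add ?_
  intro θ hθ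
  set M := sSup (u '' sphere c R) with hMdef
  set Q := (M - u c)/R with hQdef
  set ι := θ / (R + 1) with hιdef
  have hι : 0 < ι := by positivity
  have hcc := coneComparison u C hC hLip hsub c R (Q + ι) hR (by positivity) hball z hz
  have hQR : Q * R = M - u c := div_mul_cancel₀ _ (ne_of_gt hR)
  have hmaxeq : M - (Q + ι) * R ≤ u c := by nlinarith [hQR, mul_pos hι hR]
  rw [max_eq_right hmaxeq] at hcc
  have hιz : ι * ‖z - c‖ ≤ θ := by
    have h1 : ι * ‖z - c‖ ≤ ι * R := mul_le_mul_of_nonneg_left hzR hι.le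
    have h2 : ι * R ≤ θ := by
      rw [hιdef, div_mul_eq_mul_div, div_le_iff₀ (by positivity)]
      nlinarith
    linarith
  nlinarith [hcc, hιz]

lemma quotMono [Nontrivial (EuclideanSpace ℝ (Fin n))]
    (u : E → ℝ) (C : ℝ) (hC : 0 ≤ C)
    (hLip : LipschitzOnWith C.toNNReal u (closedBall (0:E) 1))
    (hsub : InfSubsol0 (ball (0:E) 1) u)
    (c : E) (s t : ℝ) (ht : 0 < t) (hts : t ≤ s)
    (hball : closedBall c s ⊆ ball (0:E) 1) :
    (sSup (u '' sphere c t) - u c)/t ≤ (sSup (u '' sphere c s) - u c)/s := by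
  have hs : 0 < s := lt_of_lt_of_le ht hts
  set Q := (sSup (u '' sphere c s) - u c)/s with hQdef
  have hub : ∀ y ∈ u '' sphere c t, y ≤ u c + Q * t := by
    rintro y ⟨w, hw, rfl⟩
    have hwt : ‖w - c‖ = t := by rwa [mem_sphere, dist_eq_norm] at hw
    have hwcb : w ∈ closedBall c s := by
      rw [mem_closedBall, dist_eq_norm, hwt]; exact hts
    have := coneBound u C hC hLip hsub c s hs hball w hwcb
    rwa [hwt] at this
  have hsne : (u '' sphere c t).Nonempty :=
    (NormedSpace.sphere_nonempty.mpr ht.le).image u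
  have hle := csSup_le hsne hub
  rw [div_le_iff₀ ht]
  have : Q * t = (sSup (u '' sphere c s) - u c)/s * t := rfl
  linarith [hle]

set_option maxHeartbeats 1000000 in
lemma endpointEst [Nontrivial (EuclideanSpace ℝ (Fin n))]
    (u : E → ℝ) (C : ℝ) (hC : 0 ≤ C)
    (hLip : LipschitzOnWith C.toNNReal u (closedBall (0:E) 1))
    (hsub : InfSubsol0 (ball (0:E) 1) u)
    (x : E) (r : ℝ) (hr : 0 < r) (hball : closedBall x r ⊆ ball (0:E) 1)
    (xr : E) (hxr : ‖xr - x‖ = r) (hmaxpt : u xr = sSup (u '' sphere x r))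
    (hb : 0 < (u xr - u x)/r)
    (s : ℝ) (hs : 0 < s) (hcb : closedBall xr s ⊆ ball (0:E) 1) :
    (u xr - u x)/r ≤ (sSup (u '' sphere xr s) - u xr)/s := by
  set b := (u xr - u x)/r with hbdef
  have hbr : b * r = u xr - u x := div_mul_cancel₀ _ (ne_of_gt hr)
  have hxr01 : xr ∈ closedBall (0:E) 1 := by
    apply (hball.trans ball_subset_closedBall)
    rw [mem_closedBall, dist_eq_norm]; exact le_of_eq hxr
  have hx01 : x ∈ closedBall (0:E) 1 :=
    (hball.trans ball_subset_closedBall) (mem_closedBall_self hr.le)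
  have hlip01 : ∀ p q', p ∈ closedBall (0:E) 1 → q' ∈ closedBall (0:E) 1 →
      u p - u q' ≤ C * ‖p - q'‖ := by
    intro p q' hp hq'
    have h := hLip.dist_le_mul p hp q' hq'
    rw [Real.coe_toNNReal C hC] at h
    calc u p - u q' ≤ |u p - u q'| := le_abs_self _
    _ = dist (u p) (u q') := (Real.dist_eq _ _).symm
    _ ≤ C * dist p q' := h
    _ = C * ‖p - q'‖ := by rw [dist_eq_norm]
  have hbC : b ≤ C := by
    have h1 : u xr - u x ≤ C * ‖xr - x‖ := hlip01 xr x hxr01 hx01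
    rw [hxr] at h1
    rw [hbdef, div_le_iff₀ hr]
    linarith
  have key : ∀ θ : ℝ, 0 < θ → θ < b → b - 2*θ ≤ (sSup (u '' sphere xr s) - u xr)/s := by
    intro θ hθ0 hθb
    have hm : ‖xr‖ + s < 1 := ball_margin xr s hs hcb
    have hxrlt : ‖xr‖ < 1 := by linarith
    set t := min (min s r) ((1 - ‖xr‖)/6) with htdef
    have ht0 : 0 < t := lt_min (lt_min hs hr) (by linarith)
    have hts : t ≤ s := le_trans (min_le_left _ _) (min_le_left _ _)
    have htr : t ≤ r := le_trans (min_le_left _ _) (min_le_right _ _)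
    have ht6 : t ≤ (1 - ‖xr‖)/6 := min_le_right _ _
    set σ := θ * t / (2*C + 1) with hσdef
    have hσ0 : 0 < σ := by positivity
    have hσt : σ < t := by
      rw [hσdef, div_lt_iff₀ (by positivity)]
      nlinarith
    have h2Cσ : 2*C*σ ≤ θ*t := by
      rw [hσdef, mul_comm (2*C), div_mul_eq_mul_div, div_le_iff₀ (by positivity)]
      nlinarith [mul_pos hθ0 ht0, mul_nonneg (mul_nonneg hθ0.le ht0.le) hC]
    set e : E := r⁻¹ • (xr - x) with hedef
    have hre : r • e = xr - x := by
      rw [hedef, smul_smul, mul_inv_cancel₀ (ne_of_gt hr), one_smul]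
    have he1 : ‖e‖ = 1 := by
      rw [hedef, norm_smul, Real.norm_eq_abs, abs_of_pos (by positivity), hxr]
      field_simp
    set p : E := xr - σ • e with hpdef
    set τ := σ + t with hτdef
    have hτ0 : 0 < τ := by positivity
    have hxrp : ‖xr - p‖ = σ := by
      rw [hpdef, sub_sub_cancel, norm_smul, Real.norm_eq_abs, abs_of_pos hσ0, he1, mul_one]
    have hpx : ‖p - x‖ = r - σ := by
      have h3 : p - x = (r - σ) • e := by
        rw [hpdef, sub_smul, hre]
        abel
      rw [h3, norm_smul, Real.norm_eq_abs, abs_of_pos (by linarith : (0:ℝ) < r - σ), he1,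
        mul_one]
    -- u p is small
    have hup : u p ≤ u xr - b*σ := by
      have h4 := coneBound u C hC hLip hsub x r hr hball p
        (by rw [mem_closedBall, dist_eq_norm, hpx]; linarith)
      rw [hpx, ← hmaxpt] at h4
      have h5 : b * (r - σ) = b*r - b*σ := by ring
      calc u p ≤ u x + b * (r - σ) := h4
      _ = u xr - b*σ := by rw [h5, hbr]; ring
    -- the ball around p is admissible
    have hpball : closedBall p τ ⊆ ball (0:E) 1 := by
      intro w hw
      rw [mem_closedBall, dist_eq_norm] at hw
      rw [mem_ball, dist_zero_right]
      have h6 : ‖p‖ ≤ ‖xr‖ + σ := by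
        calc ‖p‖ = ‖xr - σ • e‖ := by rw [hpdef]
        _ ≤ ‖xr‖ + ‖σ • e‖ := norm_sub_le _ _
        _ = ‖xr‖ + σ := by
            rw [norm_smul, Real.norm_eq_abs, abs_of_pos hσ0, he1, mul_one]
      calc ‖w‖ ≤ ‖w - p‖ + ‖p‖ := by
            have := norm_add_le (w - p) p
            simpa using this
      _ ≤ τ + (‖xr‖ + σ) := by linarith
      _ ≤ ‖xr‖ + 3*t := by rw [hτdef]; linarith
      _ < 1 := by linarith
    -- cone comparison at vertex p
    have hxrin : xr ∈ closedBall p τ := by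
      rw [mem_closedBall, dist_eq_norm, hxrp]
      linarith
    have hα : 0 < b - θ := by linarith
    have hcc := coneComparison u C hC hLip hsub p τ (b - θ) hτ0 hα hpball xr hxrin
    rw [hxrp] at hcc
    -- the vertex option is impossible
    have hMp : u xr ≤ sSup (u '' sphere p τ) - (b - θ)*τ + (b - θ)*σ := by
      rcases le_or_gt (sSup (u '' sphere p τ) - (b - θ)*τ) (u p) with hcase | hcase
      · rw [max_eq_right hcase] at hcc
        nlinarith [mul_pos hθ0 hσ0]
      · rw [max_eq_left hcase.le] at hcc
        linarith
    -- points of sphere p τ are close to sphere xr t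
    have hbdd_t : BddAbove (u '' sphere xr t) := by
      apply bddAbove_image_u u C hC hLip _ (isCompact_sphere xr t)
      refine (sphere_subset_closedBall).trans ?_
      refine subset_trans (closedBall_subset_closedBall hts) (hcb.trans ball_subset_closedBall)
    have hMτ : sSup (u '' sphere p τ) ≤ sSup (u '' sphere xr t) + C*(2*σ) := by
      have hne : (u '' sphere p τ).Nonempty :=
        (NormedSpace.sphere_nonempty.mpr hτ0.le).image u
      apply csSup_le hne
      rintro y ⟨w, hw, rfl⟩
      have hwτ : ‖w - p‖ = τ := by rwa [mem_sphere, dist_eq_norm] at hw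
      set d := ‖w - xr‖ with hddef
      have hd1 : t ≤ d := by
        have h7 : ‖w - p‖ - ‖xr - p‖ ≤ ‖w - xr‖ := by
          have := norm_sub_le_norm_sub_add_norm_sub w xr p
          linarith [norm_sub_rev xr p ▸ this]
        rw [hwτ, hxrp] at h7
        rw [hddef, hτdef] at *
        linarith
      have hd0 : 0 < d := lt_of_lt_of_le ht0 hd1
      have hd2 : d ≤ t + 2*σ := by
        have h8 : ‖w - xr‖ ≤ ‖w - p‖ + ‖p - xr‖ := norm_sub_le_norm_sub_add_norm_sub _ _ _
        rw [hwτ, norm_sub_rev p xr, hxrp] at h8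
        rw [hddef, hτdef] at *
        linarith
      set w' : E := xr + (t/d) • (w - xr) with hw'def
      have hw't : ‖w' - xr‖ = t := by
        rw [hw'def, add_sub_cancel_left, norm_smul, Real.norm_eq_abs,
          abs_of_pos (by positivity), ← hddef]
        field_simp
      have hww' : ‖w - w'‖ = d - t := by
        have h9 : w - w' = (1 - t/d) • (w - xr) := by
          rw [hw'def, sub_smul, one_smul]
          abel
        rw [h9, norm_smul, Real.norm_eq_abs, abs_of_nonneg ?_, ← hddef]
        · field_simp
        · rw [sub_nonneg, div_le_one hd0]
          exact hd1
      have hw01 : w ∈ closedBall (0:E) 1 :=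
        ball_subset_closedBall (hpball (by rw [mem_closedBall, dist_eq_norm]; exact le_of_eq hwτ))
      have hw'01 : w' ∈ closedBall (0:E) 1 := by
        apply ball_subset_closedBall
        apply hcb
        rw [mem_closedBall, dist_eq_norm, hw't]
        exact hts
      have h10 : u w - u w' ≤ C * ‖w - w'‖ := hlip01 w w' hw01 hw'01
      rw [hww'] at h10
      have h11 : u w' ≤ sSup (u '' sphere xr t) := by
        apply le_csSup hbdd_t
        refine ⟨w', ?_, rfl⟩
        rw [mem_sphere, dist_eq_norm]
        exact hw't
      have h12 : C * (d - t) ≤ C * (2*σ) := by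
        apply mul_le_mul_of_nonneg_left ?_ hC
        linarith
      linarith
    -- combine
    have hQt : b - 2*θ ≤ (sSup (u '' sphere xr t) - u xr)/t := by
      rw [le_div_iff₀ ht0]
      have h13 : (b - θ)*τ - (b - θ)*σ = (b - θ)*t := by rw [hτdef]; ring
      nlinarith [hMp, hMτ, h2Cσ]
    have hQs := quotMono u C hC hLip hsub xr s t ht0 hts hcb
    linarith
  by_contra hcon
  push_neg at hcon
  set Q := (sSup (u '' sphere xr s) - u xr)/s with hQdef
  have hθ := key (min ((b - Q)/4) (b/2))
    (lt_min (by linarith) (by linarith))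
    (lt_of_le_of_lt (min_le_right _ _) (by linarith))
  have h14 : min ((b - Q)/4) (b/2) ≤ (b - Q)/4 := min_le_left _ _
  linarith


set_option maxHeartbeats 2000000 in
/-- Gradient lower bound propagation (step in Lemma 3.4). -/
theorem stmt18 (u : EuclideanSpace ℝ (Fin n) → ℝ) (C : ℝ) (hC : 0 ≤ C)
    (hLip : LipschitzOnWith C.toNNReal u (closedBall (0 : EuclideanSpace ℝ (Fin n)) 1))
    (hsub : InfSubsol0 (ball (0 : EuclideanSpace ℝ (Fin n)) 1) u)
    (δ : ℝ) (hδpos : 0 < δ)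
    (hδ : Splus (ball (0 : EuclideanSpace ℝ (Fin n)) 1) u 0 = δ)
    (ε : ℝ) (hε : 0 < ε) (hεsmall : ε ^ ((3:ℝ)/4) < 1/2)
    (xe : EuclideanSpace ℝ (Fin n)) (hxe : xe ∈ ball (0 : EuclideanSpace ℝ (Fin n)) (1/2))
    (he : EuclideanSpace ℝ (Fin n)) (hhe : he ∈ sphere (0 : EuclideanSpace ℝ (Fin n)) (ε ^ ((3:ℝ)/4)))
    (hmaxh : u (xe + he) = sSup (u '' sphere xe (ε ^ ((3:ℝ)/4))))
    (ye : EuclideanSpace ℝ (Fin n)) (hye : ‖xe - ye‖ ≤ C * ε)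
    (hkey : u (xe + he) - u ye ≥
      sSup ((fun h => u h - u 0) '' closedBall (0 : EuclideanSpace ℝ (Fin n)) (ε ^ ((3:ℝ)/4)))
        + ‖ye‖^4 + ‖xe - ye‖^2 / (2*ε)) :
    Splus (ball (0 : EuclideanSpace ℝ (Fin n)) 1) u (xe + he) ≥ δ - C^2 * ε ^ ((1:ℝ)/4) := by
  set r : ℝ := ε ^ ((3:ℝ)/4) with hrdef
  have hr : 0 < r := Real.rpow_pos_of_pos hε _
  have hhe' : ‖he‖ = r := by
    rw [mem_sphere, dist_zero_right] at hhe
    exact hhe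
  have hhe0 : he ≠ 0 := by
    intro h
    rw [h, norm_zero] at hhe'
    exact absurd hhe'.symm (ne_of_gt hr)
  haveI : Nontrivial (EuclideanSpace ℝ (Fin n)) := ⟨he, 0, hhe0⟩
  set xr : EuclideanSpace ℝ (Fin n) := xe + he with hxrdef
  have hxr_x : ‖xr - xe‖ = r := by
    rw [hxrdef, add_sub_cancel_left]
    exact hhe'
  have hxe2 : ‖xe‖ < 1/2 := by
    rw [mem_ball, dist_zero_right] at hxe
    exact hxe
  have hball_x : closedBall xe r ⊆ ball (0:EuclideanSpace ℝ (Fin n)) 1 := by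
    intro w hw
    rw [mem_closedBall, dist_eq_norm] at hw
    rw [mem_ball, dist_zero_right]
    calc ‖w‖ ≤ ‖w - xe‖ + ‖xe‖ := by simpa using norm_add_le (w - xe) xe
    _ ≤ r + ‖xe‖ := by linarith
    _ < 1/2 + 1/2 := by linarith
    _ = 1 := by norm_num
  have hcb01 : closedBall (0:EuclideanSpace ℝ (Fin n)) r ⊆ ball (0:EuclideanSpace ℝ (Fin n)) 1 := by
    apply (closedBall_subset_ball ?_)
    linarith
  -- the quotient at 0 with radius r
  set Q0 : ℝ := (sSup (u '' sphere (0:EuclideanSpace ℝ (Fin n)) r) - u 0)/r with hQ0def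
  have hbddB : BddBelow {q : ℝ | ∃ s : ℝ, 0 < s ∧
      closedBall (0:EuclideanSpace ℝ (Fin n)) s ⊆ ball (0:EuclideanSpace ℝ (Fin n)) 1 ∧
      q = (sSup (u '' sphere (0:EuclideanSpace ℝ (Fin n)) s) - u 0) / s} := by
    refine ⟨0, ?_⟩
    rintro q ⟨s, hs, hsb, rfl⟩
    exact div_nonneg (by linarith [maxPrinciple u C hC hLip hsub 0 s hs hsb]) hs.le
  have hδQ0 : δ ≤ Q0 := by
    rw [← hδ]
    exact csInf_le hbddB ⟨r, hr, hcb01, rfl⟩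
  have hlip01 : ∀ p q', p ∈ closedBall (0:EuclideanSpace ℝ (Fin n)) 1 →
      q' ∈ closedBall (0:EuclideanSpace ℝ (Fin n)) 1 → u p - u q' ≤ C * ‖p - q'‖ := by
    intro p q' hp hq'
    have h := hLip.dist_le_mul p hp q' hq'
    rw [Real.coe_toNNReal C hC] at h
    calc u p - u q' ≤ |u p - u q'| := le_abs_self _
    _ = dist (u p) (u q') := (Real.dist_eq _ _).symm
    _ ≤ C * dist p q' := h
    _ = C * ‖p - q'‖ := by rw [dist_eq_norm]
  have hrε : ε ^ ((1:ℝ)/4) = ε / r := by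
    rw [hrdef, show ((1:ℝ)/4) = 1 - 3/4 by norm_num, Real.rpow_sub hε, Real.rpow_one]
  have hxr1 : ‖xr‖ < 1 := by
    calc ‖xr‖ ≤ ‖xe‖ + ‖he‖ := norm_add_le xe he
    _ < 1/2 + 1/2 := by rw [hhe']; linarith
    _ = 1 := by norm_num
  -- main inequality: every admissible quotient at xr is ≥ δ - C²ε^{1/4}
  rw [ge_iff_le, Splus]
  apply le_csInf
  · refine ⟨(sSup (u '' sphere xr ((1 - ‖xr‖)/2)) - u xr)/((1 - ‖xr‖)/2),
      (1 - ‖xr‖)/2, by linarith, ?_, rfl⟩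
    intro w hw
    rw [mem_closedBall, dist_eq_norm] at hw
    rw [mem_ball, dist_zero_right]
    calc ‖w‖ ≤ ‖w - xr‖ + ‖xr‖ := by simpa using norm_add_le (w - xr) xr
    _ ≤ (1 - ‖xr‖)/2 + ‖xr‖ := by linarith
    _ < 1 := by linarith
  · rintro q ⟨s, hs, hcbs, rfl⟩
    have hq0 : 0 ≤ (sSup (u '' sphere xr s) - u xr)/s :=
      div_nonneg (by linarith [maxPrinciple u C hC hLip hsub xr s hs hcbs]) hs.le
    rcases le_or_gt (δ - C^2 * ε ^ ((1:ℝ)/4)) 0 with hT | hTpos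
    · linarith
    -- now δ - C²ε^{1/4} > 0
    by_cases hy01 : ye ∈ closedBall (0:EuclideanSpace ℝ (Fin n)) 1
    · -- Step 1 : the slope b = (u xr - u xe)/r is at least δ - C²ε^{1/4}
      set b : ℝ := (u xr - u xe)/r with hbdef
      have hbddSUP : BddAbove ((fun h => u h - u 0) ''
          closedBall (0:EuclideanSpace ℝ (Fin n)) r) := by
        apply IsCompact.bddAbove
        apply (isCompact_closedBall _ _).image_of_continuousOn
        apply ContinuousOn.sub ?_ continuousOn_const
        exact hLip.continuousOn.mono (hcb01.trans ball_subset_closedBall)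
      have hSUPge : Q0 * r ≤ sSup ((fun h => u h - u 0) ''
          closedBall (0:EuclideanSpace ℝ (Fin n)) r) := by
        have h1 : sSup (u '' sphere (0:EuclideanSpace ℝ (Fin n)) r) - u 0 ≤
            sSup ((fun h => u h - u 0) '' closedBall (0:EuclideanSpace ℝ (Fin n)) r) := by
          have h2 : (u '' sphere (0:EuclideanSpace ℝ (Fin n)) r).Nonempty :=
            (NormedSpace.sphere_nonempty.mpr hr.le).image u
          rw [sub_le_iff_le_add]
          apply csSup_le h2
          rintro y ⟨w, hw, rfl⟩
          have h3 : u w - u 0 ≤ sSup ((fun h => u h - u 0) ''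
              closedBall (0:EuclideanSpace ℝ (Fin n)) r) :=
            le_csSup hbddSUP ⟨w, sphere_subset_closedBall hw, rfl⟩
          linarith
        have h4 : Q0 * r = sSup (u '' sphere (0:EuclideanSpace ℝ (Fin n)) r) - u 0 :=
          div_mul_cancel₀ _ (ne_of_gt hr)
        linarith
      have hlipxy : u xe - u ye ≤ C * ‖xe - ye‖ :=
        hlip01 xe ye (ball_subset_closedBall (by
          rw [mem_ball, dist_zero_right]; linarith)) hy01
      have hquad : C * ‖xe - ye‖ - ‖xe - ye‖^2/(2*ε) ≤ C^2*ε/2 := by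
        rw [sub_le_iff_le_add, ← sub_le_iff_le_add']
        rw [le_div_iff₀ (by positivity)]
        nlinarith [sq_nonneg (‖xe - ye‖ - C*ε)]
      have hbge : δ - C^2 * ε ^ ((1:ℝ)/4) ≤ b := by
        have h5 : u xr - u xe ≥ δ*r - C^2*ε/2 := by
          have h6 : u xr - u xe = (u xr - u ye) - (u xe - u ye) := by ring
          have h7 : (0:ℝ) ≤ ‖ye‖^4 := by positivity
          have h8 : δ * r ≤ Q0 * r := mul_le_mul_of_nonneg_right hδQ0 hr.le
          rw [h6]
          have h9 := hkey
          nlinarith [hlipxy, hquad, hSUPge]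
        rw [hbdef, le_div_iff₀ hr]
        have hεr2 : ε ^ ((1:ℝ)/4) * r = ε := by
          rw [hrdef, ← Real.rpow_add hε]; norm_num
        calc (δ - C^2 * ε ^ ((1:ℝ)/4)) * r = δ*r - C^2 * (ε ^ ((1:ℝ)/4) * r) := by ring
        _ = δ*r - C^2*ε := by rw [hεr2]
        _ ≤ δ*r - C^2*ε/2 := by nlinarith [mul_nonneg (sq_nonneg C) hε.le]
        _ ≤ u xr - u xe := by linarith [h5]
      have hb0 : 0 < b := lt_of_lt_of_le hTpos hbge
      have hq := endpointEst u C hC hLip hsub xe r hr hball_x xr hxr_x hmaxh hb0 s hs hcbs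
      linarith
    · -- ye lies outside the unit ball : then C ε > 1/2 and the bound is vacuous
      exfalso
      have hyout : 1 < ‖ye‖ := by
        rw [mem_closedBall, dist_zero_right] at hy01
        linarith [not_le.mp hy01]
      have hCε : 1/2 < C * ε := by
        have h11 : ‖ye‖ - ‖xe‖ ≤ ‖xe - ye‖ := by
          rw [norm_sub_rev]
          exact norm_sub_norm_le ye xe
        linarith
      have hQ0C : Q0 ≤ C := by
        rw [hQ0def, div_le_iff₀ hr]
        have h12 : sSup (u '' sphere (0:EuclideanSpace ℝ (Fin n)) r) ≤ u 0 + C*r := by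
          apply csSup_le ((NormedSpace.sphere_nonempty.mpr hr.le).image u)
          rintro y ⟨w, hw, rfl⟩
          have hwr : ‖w‖ = r := by
            rw [mem_sphere, dist_zero_right] at hw
            exact hw
          have h13 := hlip01 w 0 (ball_subset_closedBall (hcb01 (by
            rw [mem_closedBall, dist_zero_right, hwr]))) (mem_closedBall_self one_pos.le)
          rw [sub_zero, hwr] at h13
          linarith
        linarith
      have hCq : 1 < C * ε ^ ((1:ℝ)/4) := by
        rw [hrε, mul_div_assoc', lt_div_iff₀ hr]
        linarith
      have hfin : C^2 * ε ^ ((1:ℝ)/4) ≥ C := by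
        have h14 : C * 1 ≤ C * (C * ε ^ ((1:ℝ)/4)) :=
          mul_le_mul_of_nonneg_left hCq.le hC
        nlinarith [h14]
      linarith [hδQ0, hQ0C]
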